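/- Let (u,p) ∈ V × Q be arbitrary with (u,p) ≠ (0,0). Then γ · (‖u‖_V² + ‖p‖_Q²)^{1/2} ≤ S(u,p), where S(u,p) := sup over (0,0) ≠ (w,r) ∈ V × Q of |A((u,p);(w,r))| / (‖w‖_V² + ‖r‖_Q²)^{1/2}, and γ := (1/2) · (α⁻²(1 + 2C_b²M²)² + 2C_b²)^{-1/2}. In other words, the combined Oseen-type saddle-point form A satisfies an inf-sup condition in its second argument with the explicit constant γ depending only on α, M, C_b. -/

import Mathlib

set_option maxHeartbeats 2000000 in
/-- The combined Oseen-type saddle-point form `A` on `X = V × Q` satisfies an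
inf-sup condition in its second argument with explicit constant
`γ = (1/2)·(α⁻²(1+2C_b²M²)² + 2C_b²)^(-1/2)`. -/
theorem oseen_saddle_infsup_second_argument
    {V Q : Type*} [NormedAddCommGroup V] [InnerProductSpace ℂ V] [CompleteSpace V]
    [NormedAddCommGroup Q] [InnerProductSpace ℂ Q] [CompleteSpace Q]
    (a : V →ₗ[ℂ] V →ₛₗ[starRingEnd ℂ] ℂ)
    (d : Q →ₗ[ℂ] V →ₛₗ[starRingEnd ℂ] ℂ)
    (α M M_d C_b : ℝ) (hα : 0 < α) (hM : 0 < M) (hMd : 0 < M_d) (hCb : 0 < C_b)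
    (hcoer : ∀ v : V, α * ‖v‖ ^ 2 ≤ (a v v).re)
    (hcont : ∀ u v : V, ‖a u v‖ ≤ M * ‖u‖ * ‖v‖)
    (hdbdd : ∀ (q : Q) (v : V), ‖d q v‖ ≤ M_d * ‖q‖ * ‖v‖)
    (hinv : ∀ q : Q, ∃ vt : V, d q vt = (‖q‖ : ℂ) ^ 2 ∧ ‖vt‖ ≤ C_b * ‖q‖)
    (A : V × Q → V × Q → ℂ)
    (hA : ∀ (u : V) (p : Q) (v : V) (q : Q),
      A (u, p) (v, q) = a u v + d p v - starRingEnd ℂ (d q u))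
    (γ : ℝ)
    (hγ : γ = (1 / 2) / Real.sqrt (α⁻¹ ^ 2 * (1 + 2 * C_b ^ 2 * M ^ 2) ^ 2 + 2 * C_b ^ 2))
    (u : V) (p : Q) (hup : (u, p) ≠ (0, 0)) :
    γ * Real.sqrt (‖u‖ ^ 2 + ‖p‖ ^ 2) ≤
      sSup {s : ℝ | ∃ (w : V) (r : Q), (w, r) ≠ (0, 0) ∧
        s = ‖A (u, p) (w, r)‖ / Real.sqrt (‖w‖ ^ 2 + ‖r‖ ^ 2)} := by
  set S : Set ℝ := {s : ℝ | ∃ (w : V) (r : Q), (w, r) ≠ (0, 0) ∧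
      s = ‖A (u, p) (w, r)‖ / Real.sqrt (‖w‖ ^ 2 + ‖r‖ ^ 2)} with hSdef
  -- denominator positivity
  have hden : ∀ (w : V) (r : Q), (w, r) ≠ ((0 : V), (0 : Q)) →
      0 < Real.sqrt (‖w‖ ^ 2 + ‖r‖ ^ 2) := by
    intro w r h
    rw [Real.sqrt_pos]
    rcases eq_or_ne w 0 with hw | hw
    · have hr : r ≠ 0 := by
        intro hr; exact h (by simp [hw, hr])
      have : 0 < ‖r‖ := norm_pos_iff.mpr hr
      nlinarith [sq_nonneg ‖w‖]
    · have : 0 < ‖w‖ := norm_pos_iff.mpr hw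
      nlinarith [sq_nonneg ‖r‖]
  -- norm of pieces bounded by sqrt
  have hle1 : ∀ (w : V) (r : Q), ‖w‖ ≤ Real.sqrt (‖w‖ ^ 2 + ‖r‖ ^ 2) := by
    intro w r
    calc ‖w‖ = Real.sqrt (‖w‖ ^ 2) := (Real.sqrt_sq (norm_nonneg w)).symm
      _ ≤ Real.sqrt (‖w‖ ^ 2 + ‖r‖ ^ 2) := Real.sqrt_le_sqrt (by nlinarith [sq_nonneg ‖r‖])
  have hle2 : ∀ (w : V) (r : Q), ‖r‖ ≤ Real.sqrt (‖w‖ ^ 2 + ‖r‖ ^ 2) := by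
    intro w r
    calc ‖r‖ = Real.sqrt (‖r‖ ^ 2) := (Real.sqrt_sq (norm_nonneg r)).symm
      _ ≤ Real.sqrt (‖w‖ ^ 2 + ‖r‖ ^ 2) := Real.sqrt_le_sqrt (by nlinarith [sq_nonneg ‖w‖])
  -- boundedness above
  have hbdd : BddAbove S := by
    refine ⟨M * ‖u‖ + M_d * ‖p‖ + M_d * ‖u‖, ?_⟩
    rintro s ⟨w, r, hwr, rfl⟩
    have hd := hden w r hwr
    rw [div_le_iff₀ hd, hA]
    calc ‖a u w + d p w - (starRingEnd ℂ) (d r u)‖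
        ≤ ‖a u w + d p w‖ + ‖(starRingEnd ℂ) (d r u)‖ := norm_sub_le _ _
      _ ≤ ‖a u w‖ + ‖d p w‖ + ‖d r u‖ := by
          rw [RCLike.norm_conj]
          exact add_le_add_left (norm_add_le (a u w) (d p w)) _
      _ ≤ M * ‖u‖ * ‖w‖ + M_d * ‖p‖ * ‖w‖ + M_d * ‖r‖ * ‖u‖ :=
          add_le_add (add_le_add (hcont u w) (hdbdd p w)) (hdbdd r u)
      _ = M * ‖u‖ * ‖w‖ + M_d * ‖p‖ * ‖w‖ + M_d * ‖u‖ * ‖r‖ := by ring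
      _ ≤ M * ‖u‖ * Real.sqrt (‖w‖ ^ 2 + ‖r‖ ^ 2)
          + M_d * ‖p‖ * Real.sqrt (‖w‖ ^ 2 + ‖r‖ ^ 2)
          + M_d * ‖u‖ * Real.sqrt (‖w‖ ^ 2 + ‖r‖ ^ 2) := by
          gcongr <;>
            first
              | exact hle1 w r
              | exact hle2 w r
              | positivity
      _ = (M * ‖u‖ + M_d * ‖p‖ + M_d * ‖u‖) * Real.sqrt (‖w‖ ^ 2 + ‖r‖ ^ 2) := by ring
  set s : ℝ := sSup S with hs
  set t : ℝ := Real.sqrt (‖u‖ ^ 2 + ‖p‖ ^ 2) with ht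
  have htpos : 0 < t := hden u p hup
  -- first test function : (u, p)
  have hmem1 : ‖A (u, p) (u, p)‖ / t ∈ S := ⟨u, p, hup, rfl⟩
  have he1 : ‖A (u, p) (u, p)‖ / t ≤ s := le_csSup hbdd hmem1
  have hs0 : 0 ≤ s := le_trans (by positivity) he1
  have hre : α * ‖u‖ ^ 2 ≤ ‖A (u, p) (u, p)‖ := by
    have h1 : (A (u, p) (u, p)).re = (a u u).re := by
      rw [hA]; simp
    calc α * ‖u‖ ^ 2 ≤ (a u u).re := hcoer u
      _ = (A (u, p) (u, p)).re := h1.symm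
      _ ≤ ‖A (u, p) (u, p)‖ := Complex.re_le_norm _
  have h1 : α * ‖u‖ ^ 2 ≤ s * t := by
    have := (div_le_iff₀ htpos).mp he1
    linarith [hre]
  -- second test function : (vt, 0)
  have h2 : ‖p‖ ≤ C_b * (s + M * ‖u‖) := by
    rcases eq_or_ne p 0 with hp | hp
    · rw [hp, norm_zero]
      have : 0 ≤ s + M * ‖u‖ := by positivity
      positivity
    · have hpn : 0 < ‖p‖ := norm_pos_iff.mpr hp
      obtain ⟨vt, hdv, hvtn⟩ := hinv p
      have hvt0 : vt ≠ 0 := by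
        intro h
        rw [h, map_zero] at hdv
        have : (‖p‖ : ℂ) = 0 := by
          have := hdv.symm
          exact pow_eq_zero_iff (two_ne_zero) |>.mp this
        rw [Complex.ofReal_eq_zero] at this
        exact hpn.ne' this
      have hvtne : ((vt, (0 : Q))) ≠ ((0 : V), (0 : Q)) := by
        simp [Prod.ext_iff, hvt0]
      have hvpos : 0 < ‖vt‖ := norm_pos_iff.mpr hvt0
      have hsq : Real.sqrt (‖vt‖ ^ 2 + ‖(0 : Q)‖ ^ 2) = ‖vt‖ := by
        simp [Real.sqrt_sq (norm_nonneg vt)]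
      have hmem2 : ‖A (u, p) (vt, 0)‖ / Real.sqrt (‖vt‖ ^ 2 + ‖(0 : Q)‖ ^ 2) ∈ S :=
        ⟨vt, 0, hvtne, rfl⟩
      have he2 : ‖A (u, p) (vt, 0)‖ ≤ s * ‖vt‖ := by
        have := le_csSup hbdd hmem2
        rw [hsq, div_le_iff₀ hvpos] at this
        exact this
      have hAval : A (u, p) (vt, 0) = a u vt + (‖p‖ : ℂ) ^ 2 := by
        rw [hA, hdv]
        simp
      have hkey : ‖p‖ ^ 2 ≤ ‖A (u, p) (vt, 0)‖ + M * ‖u‖ * ‖vt‖ := by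
        have hnp : ‖((‖p‖ : ℂ) ^ 2)‖ = ‖p‖ ^ 2 := by
          rw [norm_pow, Complex.norm_real, Real.norm_of_nonneg (norm_nonneg p)]
        have h3 : ‖((‖p‖ : ℂ) ^ 2)‖ ≤ ‖a u vt + (‖p‖ : ℂ) ^ 2‖ + ‖a u vt‖ := by
          have := norm_sub_le (a u vt + (‖p‖ : ℂ) ^ 2) (a u vt)
          simpa using this
        rw [hnp] at h3
        rw [hAval]
        exact le_trans h3 (by linarith [hcont u vt])
      have hfin : ‖p‖ ^ 2 ≤ (s + M * ‖u‖) * (C_b * ‖p‖) := by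
        have h4 : ‖p‖ ^ 2 ≤ (s + M * ‖u‖) * ‖vt‖ := by nlinarith [hkey, he2]
        have h5 : 0 ≤ s + M * ‖u‖ := by positivity
        nlinarith [mul_le_mul_of_nonneg_left hvtn h5]
      nlinarith [hfin, hpn]
  -- combine
  set K : ℝ := α⁻¹ * (1 + 2 * C_b ^ 2 * M ^ 2) with hK
  set R : ℝ := Real.sqrt (α⁻¹ ^ 2 * (1 + 2 * C_b ^ 2 * M ^ 2) ^ 2 + 2 * C_b ^ 2) with hR
  have hRpos : 0 < R := Real.sqrt_pos.mpr (by positivity)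
  have hR2 : R ^ 2 = K ^ 2 + 2 * C_b ^ 2 := by
    rw [hR, Real.sq_sqrt (by positivity), hK]
    ring
  have hu2 : ‖u‖ ^ 2 ≤ α⁻¹ * (s * t) := by
    have h1' : ‖u‖ ^ 2 ≤ s * t / α := (le_div_iff₀' hα).mpr h1
    calc ‖u‖ ^ 2 ≤ s * t / α := h1'
      _ = α⁻¹ * (s * t) := by field_simp
  have hp2 : ‖p‖ ^ 2 ≤ 2 * C_b ^ 2 * s ^ 2 + 2 * C_b ^ 2 * M ^ 2 * ‖u‖ ^ 2 := by
    have h9 := pow_le_pow_left₀ (norm_nonneg p) h2 2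
    have h8 : (C_b * (s + M * ‖u‖)) ^ 2 ≤ 2 * C_b ^ 2 * s ^ 2 + 2 * C_b ^ 2 * M ^ 2 * ‖u‖ ^ 2 := by
      nlinarith [mul_nonneg (sq_nonneg C_b) (sq_nonneg (s - M * ‖u‖))]
    linarith
  have ht2 : t ^ 2 = ‖u‖ ^ 2 + ‖p‖ ^ 2 := Real.sq_sqrt (by positivity)
  have hquad : t ^ 2 ≤ K * (s * t) + 2 * C_b ^ 2 * s ^ 2 := by
    have hK0 : 0 ≤ 1 + 2 * C_b ^ 2 * M ^ 2 := by positivity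
    have := mul_le_mul_of_nonneg_left hu2 hK0
    rw [ht2]
    calc ‖u‖ ^ 2 + ‖p‖ ^ 2
        ≤ (1 + 2 * C_b ^ 2 * M ^ 2) * ‖u‖ ^ 2 + 2 * C_b ^ 2 * s ^ 2 := by nlinarith [hp2, sq_nonneg ‖u‖]
      _ ≤ (1 + 2 * C_b ^ 2 * M ^ 2) * (α⁻¹ * (s * t)) + 2 * C_b ^ 2 * s ^ 2 := by linarith
      _ = K * (s * t) + 2 * C_b ^ 2 * s ^ 2 := by rw [hK]; ring
  have hts : t ^ 2 ≤ (K ^ 2 + 4 * C_b ^ 2) * s ^ 2 := by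
    nlinarith [hquad, sq_nonneg (K * s - t)]
  have hfinal : t ≤ 2 * R * s := by
    have h6 : t ^ 2 ≤ (2 * R * s) ^ 2 := by
      have : (2 * R * s) ^ 2 = 4 * (K ^ 2 + 2 * C_b ^ 2) * s ^ 2 := by
        rw [mul_pow, mul_pow, hR2]; ring
      rw [this]
      nlinarith [hts, sq_nonneg s, sq_nonneg K, sq_nonneg C_b]
    have h7 : 0 ≤ 2 * R * s := by positivity
    calc t = Real.sqrt (t ^ 2) := (Real.sqrt_sq htpos.le).symm
      _ ≤ Real.sqrt ((2 * R * s) ^ 2) := Real.sqrt_le_sqrt h6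
      _ = 2 * R * s := Real.sqrt_sq h7
  rw [hγ, div_mul_eq_mul_div, div_le_iff₀ hRpos]
  linarith [mul_le_mul_of_nonneg_left hfinal (le_of_lt hRpos)]
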